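/- Let u be a real number that is algebraic of degree 3 over ℚ, and let v be an element of the field ℚ(u) with v ∉ ℚ. Then there exist a, b, c, d ∈ ℚ with ad - bc ≠ 0 and cu + d ≠ 0 such that v = (au + b)/(cu + d). -/

import Mathlib

open IntermediateField

/-- Any non-rational element of the cubic field ℚ(u) is the image of `u`
under a Möbius transformation in GL₂(ℚ). -/
theorem mem_cubic_field_eq_moebius (u : ℝ) (hu : (minpoly ℚ u).natDegree = 3)
    (v : ℝ) (hv : v ∈ IntermediateField.adjoin ℚ ({u} : Set ℝ))
    (hvQ : v ∉ Set.range ((↑) : ℚ → ℝ)) :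
    ∃ a b c d : ℚ, a * d - b * c ≠ 0 ∧ (c : ℝ) * u + (d : ℝ) ≠ 0 ∧
      v = ((a : ℝ) * u + (b : ℝ)) / ((c : ℝ) * u + (d : ℝ)) := by
  have hint : IsIntegral ℚ u := by
    by_contra h
    rw [minpoly.eq_zero h] at hu
    simp at hu
  -- u is irrational
  have huQ : u ∉ Set.range ((↑) : ℚ → ℝ) := by
    rintro ⟨t, rfl⟩
    have h1 : minpoly ℚ ((t : ℚ) : ℝ) = Polynomial.X - Polynomial.C t := by
      have := minpoly.eq_X_sub_C ℝ t
      rwa [show (algebraMap ℚ ℝ) t = ((t : ℚ) : ℝ) from eq_ratCast (algebraMap ℚ ℝ) t] at this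
    rw [h1] at hu
    simp [Polynomial.natDegree_X_sub_C] at hu
  set m := minpoly ℚ u with hmdef
  have hmon : m.Monic := minpoly.monic hint
  -- express v as a polynomial in u of degree ≤ 2
  have hv' : v ∈ Algebra.adjoin ℚ ({u} : Set ℝ) := by
    rw [← IntermediateField.adjoin_simple_toSubalgebra_of_isAlgebraic hint.isAlgebraic]
    exact hv
  rw [Algebra.adjoin_singleton_eq_range_aeval] at hv'
  obtain ⟨P, hP⟩ := hv'
  set R := P %ₘ m with hRdef
  have hvR : Polynomial.aeval u R = v := by
    have hPd := Polynomial.modByMonic_add_div P m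
    calc Polynomial.aeval u R
        = Polynomial.aeval u (R + m * (P /ₘ m)) := by
          rw [map_add, map_mul, hmdef, minpoly.aeval]; ring
      _ = v := by rw [hRdef, hPd]; exact hP
  have hRdeg : R.natDegree < 3 := by
    have h1 := Polynomial.degree_modByMonic_lt P hmon
    have h2 : m.degree = 3 := by
      rw [Polynomial.degree_eq_natDegree hmon.ne_zero, hu]; rfl
    rw [h2] at h1
    by_cases hR0 : R = 0
    · rw [hR0]; simp
    · exact (Polynomial.natDegree_lt_iff_degree_lt hR0).mpr h1
  obtain ⟨p, hp⟩ : ∃ x, x = R.coeff 0 := ⟨_, rfl⟩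
  obtain ⟨q, hq⟩ : ∃ x, x = R.coeff 1 := ⟨_, rfl⟩
  obtain ⟨r, hr⟩ : ∃ x, x = R.coeff 2 := ⟨_, rfl⟩
  have hvpqr : v = (p : ℝ) + (q : ℝ) * u + (r : ℝ) * u ^ 2 := by
    rw [← hvR, Polynomial.aeval_eq_sum_range' hRdeg, hp, hq, hr]
    simp only [Finset.sum_range_succ, Finset.sum_range_zero, Rat.smul_def]
    ring
  obtain ⟨e0, he0⟩ : ∃ x, x = m.coeff 0 := ⟨_, rfl⟩
  obtain ⟨e1, he1⟩ : ∃ x, x = m.coeff 1 := ⟨_, rfl⟩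
  obtain ⟨e2, he2⟩ : ∃ x, x = m.coeff 2 := ⟨_, rfl⟩
  have hcube : u ^ 3 = -((e0 : ℝ) + (e1 : ℝ) * u + (e2 : ℝ) * u ^ 2) := by
    have h0 : Polynomial.aeval u m = 0 := minpoly.aeval ℚ u
    have h3 : m.coeff 3 = 1 := by
      have := hmon.coeff_natDegree
      rwa [hu] at this
    rw [Polynomial.aeval_eq_sum_range' (n := 4) (by omega) u] at h0
    simp only [Finset.sum_range_succ, Finset.sum_range_zero, Rat.smul_def, h3,
      ← he0, ← he1, ← he2] at h0
    push_cast at h0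
    nlinarith [h0]
  -- the Möbius coefficients
  obtain ⟨c, hc⟩ : ∃ x, x = r := ⟨_, rfl⟩
  obtain ⟨d, hd⟩ : ∃ x, x = r * e2 - q := ⟨_, rfl⟩
  obtain ⟨a, ha⟩ : ∃ x, x = p * r + d * q - r ^ 2 * e1 := ⟨_, rfl⟩
  obtain ⟨b, hb⟩ : ∃ x, x = d * p - r ^ 2 * e0 := ⟨_, rfl⟩
  have key : v * ((c : ℝ) * u + (d : ℝ)) = (a : ℝ) * u + (b : ℝ) := by
    rw [hvpqr, ha, hb, hd, hc]
    push_cast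
    nlinarith [hcube]
  have hcd : ¬(c = 0 ∧ d = 0) := by
    rintro ⟨hc0, hd0⟩
    have hr0 : r = 0 := hc ▸ hc0
    have hq0 : q = 0 := by
      rw [hd0, hr0] at hd; linarith [hd.symm]
    exact hvQ ⟨p, by rw [hvpqr, hr0, hq0]; push_cast; ring⟩
  have hden : (c : ℝ) * u + (d : ℝ) ≠ 0 := by
    intro h0
    by_cases hc0 : c = 0
    · have hd0 : (d : ℝ) = 0 := by rw [hc0] at h0; push_cast at h0; linarith
      exact hcd ⟨hc0, by exact_mod_cast hd0⟩
    · apply huQ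
      refine ⟨-d / c, ?_⟩
      have hcR : (c : ℝ) ≠ 0 := by exact_mod_cast hc0
      push_cast
      field_simp
      linarith [h0]
  refine ⟨a, b, c, d, ?_, hden, ?_⟩
  · intro hdet
    apply hvQ
    by_cases hc0 : c = 0
    · have hd0 : d ≠ 0 := fun h => hcd ⟨hc0, h⟩
      have ha0 : a = 0 := by
        have had : a * d = 0 := by rw [hc0] at hdet; linarith [hdet]
        exact (mul_eq_zero.mp had).resolve_right hd0
      have h2 : v * (d : ℝ) = (b : ℝ) := by
        have hk := key
        rw [hc0, ha0] at hk
        push_cast at hk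
        linarith [hk]
      refine ⟨b / d, ?_⟩
      have hdR : (d : ℝ) ≠ 0 := by exact_mod_cast hd0
      push_cast
      field_simp
      linarith [h2]
    · refine ⟨a / c, ?_⟩
      have hcR : (c : ℝ) ≠ 0 := by exact_mod_cast hc0
      have hdet' : (a : ℝ) * (d : ℝ) - (b : ℝ) * (c : ℝ) = 0 := by
        have : ((a * d - b * c : ℚ) : ℝ) = 0 := by rw [hdet]; norm_num
        push_cast at this
        linarith [this]
      have h1 : (a : ℝ) * u + (b : ℝ) = ((a : ℝ) / (c : ℝ)) * ((c : ℝ) * u + (d : ℝ)) := by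
        field_simp
        linarith [hdet']
      have hk := key
      rw [h1] at hk
      have h2 : v = (a : ℝ) / (c : ℝ) := mul_right_cancel₀ hden hk
      rw [h2]; push_cast; ring
  · rw [eq_div_iff hden, key]
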